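/- The map Ξ sending the monomial x_1^{α_1}⋯x_n^{α_n} to the sequence of partial sums (α_1, α_1+α_2, …, α_1+⋯+α_n, α_1+⋯+α_n, …) is an order isomorphism from the poset (M, A_{·,·}) onto the set of weakly increasing, eventually constant functions ℕ⁺ → ℕ ordered by pointwise comparison. In particular (M, A_{·,·}) is a distributive lattice. -/

import Mathlib

/-- The free abelian monoid `M` on variables `x₁, x₂, …`, identified with
finitely supported exponent vectors; index `i : ℕ` represents the variable `x_{i+1}`. -/
abbrev Mon : Type := ℕ →₀ ℕ

/-- Total degree of a monomial. -/
def deg (m : Mon) : ℕ := m.sum fun _ v => v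

/-- `m` is a monomial in the first `n` variables, i.e. `m ∈ Mⁿ`. -/
def InVars (n : ℕ) (m : Mon) : Prop := ∀ i ∈ m.support, i < n

/-- Elementary move: `m = (x_i / x_j) · m'` for some `i < j` with `x_j ∣ m'`. -/
def ElemMove (m m' : Mon) : Prop :=
  ∃ i j : ℕ, i < j ∧ m + Finsupp.single j 1 = m' + Finsupp.single i 1

/-- Stable move: `m = (x_i / x_s) · m'` where `s = maxsupp m'` and `i < s`. -/
def StableMove (m m' : Mon) : Prop :=
  ∃ s i : ℕ, i < s ∧ m' s ≠ 0 ∧ (∀ t, s < t → m' t = 0) ∧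
    m + Finsupp.single s 1 = m' + Finsupp.single i 1

/-- The divisibility relation `D`: `(m, m') ∈ D` iff `m'` divides `m`. -/
def Dvd' (m m' : Mon) : Prop := ∃ t : Mon, m = m' + t

/-- The strongly stable partial order `A_{n,d}` on monomials of degree `d`
in the first `n` variables: reflexive–transitive closure of elementary moves
within `M_d^n`. -/
def Asub (n d : ℕ) (m m' : Mon) : Prop :=
  Relation.ReflTransGen
    (fun a b => InVars n a ∧ InVars n b ∧ deg a = d ∧ deg b = d ∧ ElemMove a b) m m'

/-- `A_{·,·} = rtr(D ∪ ⋃_{n,d} A_{n,d})`. -/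
def Aall : Mon → Mon → Prop :=
  Relation.ReflTransGen (fun a b => Dvd' a b ∨ ∃ n d, Asub n d a b)

/-- The map `Ξ` sending `x₁^{α₁} ⋯ x_n^{α_n}` to its sequence of partial sums
`(α₁, α₁+α₂, …)`; position `k` holds `α₁ + ⋯ + α_{k+1}`. -/
def Xi (m : Mon) : ℕ → ℕ := fun k => ∑ i ∈ Finset.range (k + 1), m i


lemma Xi_add (a b : Mon) (k : ℕ) : Xi (a + b) k = Xi a k + Xi b k := by
  simp [Xi, Finset.sum_add_distrib]

lemma Xi_single (j c k : ℕ) : Xi (Finsupp.single j c) k = if j ≤ k then c else 0 := by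
  simp [Xi, Finsupp.single_apply, Finset.sum_ite_eq, Nat.lt_succ_iff]

lemma Xi_mono (m : Mon) : Monotone (Xi m) := by
  intro x y h
  exact Finset.sum_le_sum_of_subset (Finset.range_subset_range.mpr (by omega))

lemma Xi_eq_deg (m : Mon) (k : ℕ) (h : ∀ i ∈ m.support, i ≤ k) : Xi m k = deg m := by
  unfold Xi deg
  rw [Finsupp.sum]
  refine (Finset.sum_subset ?_ ?_).symm
  · intro i hi
    simp only [Finset.mem_range, Nat.lt_succ_iff]
    exact h i hi
  · intro x _ hx
    exact Finsupp.notMem_support_iff.mp hx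

lemma Xi_eventually (m : Mon) (k : ℕ) (h : m.support.sup id ≤ k) : Xi m k = deg m :=
  Xi_eq_deg m k fun i hi => le_trans (Finset.le_sup (f := id) hi) h

lemma Xi_le_deg (m : Mon) (k : ℕ) : Xi m k ≤ deg m :=
  le_trans (Xi_mono m (le_max_left k (m.support.sup id)))
    (Xi_eventually m _ (le_max_right _ _)).le

lemma Xi_inj : Function.Injective Xi := by
  intro a b h
  ext i
  cases i with
  | zero => simpa [Xi] using congrFun h 0
  | succ k =>
    have h1 := congrFun h k
    have h2 := congrFun h (k + 1)
    simp only [Xi, Finset.sum_range_succ] at h1 h2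
    omega


lemma mem_range_Xi {g : ℕ → ℕ} (hm : Monotone g) (N : ℕ) (hN : ∀ k, N ≤ k → g k = g N) :
    ∃ m : Mon, Xi m = g := by
  classical
  set f : ℕ → ℕ := fun i => match i with | 0 => g 0 | k + 1 => g (k + 1) - g k with hf
  refine ⟨Finsupp.onFinset (Finset.range (N + 1)) f ?_, ?_⟩
  · intro i hi
    rw [Finset.mem_range]
    by_contra hlt
    push_neg at hlt
    match i, hlt with
    | k + 1, hlt =>
      have h1 : g (k + 1) = g N := hN _ (by omega)
      have h2 : g k = g N := hN _ (by omega)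
      simp only [hf] at hi
      omega
  · funext k
    induction k with
    | zero => simp [Xi, hf]
    | succ k ih =>
      have hmk : g k ≤ g (k + 1) := hm (by omega)
      simp only [Xi, Finset.sum_range_succ] at ih ⊢
      simp only [Finsupp.onFinset_apply, hf] at ih ⊢
      omega

lemma Xi_range : Set.range Xi = {g : ℕ → ℕ | Monotone g ∧ ∃ N, ∀ k, N ≤ k → g k = g N} := by
  ext g
  constructor
  · rintro ⟨m, rfl⟩
    refine ⟨Xi_mono m, m.support.sup id, fun k hk => ?_⟩
    rw [Xi_eventually m k hk, Xi_eventually m _ le_rfl]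
  · rintro ⟨hm, N, hN⟩
    exact mem_range_Xi hm N hN

lemma elemMove_Xi {a b : Mon} (h : ElemMove a b) (k : ℕ) : Xi b k ≤ Xi a k := by
  obtain ⟨i, j, hij, heq⟩ := h
  have := congrArg (fun m => Xi m k) heq
  simp only [Xi_add, Xi_single] at this
  split_ifs at this <;> omega

lemma asub_le {n d : ℕ} {a b : Mon} (h : Asub n d a b) (k : ℕ) : Xi b k ≤ Xi a k := by
  induction h with
  | refl => exact le_rfl
  | tail _ h2 ih => exact le_trans (elemMove_Xi h2.2.2.2.2 k) ih

lemma aall_le {a b : Mon} (h : Aall a b) (k : ℕ) : Xi b k ≤ Xi a k := by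
  induction h with
  | refl => exact le_rfl
  | tail _ h2 ih =>
    refine le_trans ?_ ih
    rcases h2 with ⟨t, rfl⟩ | ⟨n, d, h2⟩
    · rw [Xi_add]; omega
    · exact asub_le h2 k

lemma deg_add (a b : Mon) : deg (a + b) = deg a + deg b := by
  unfold deg
  exact Finsupp.sum_add_index' (fun _ => rfl) (fun _ _ _ => rfl)

lemma deg_single (j c : ℕ) : deg (Finsupp.single j c) = c := by
  unfold deg
  exact Finsupp.sum_single_index rfl


lemma eqdeg (n : ℕ) : ∀ W : ℕ, ∀ a c : Mon, InVars n a → InVars n c → deg a = deg c →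
    (∀ k, Xi c k ≤ Xi a k) → (∑ k ∈ Finset.range n, (Xi a k - Xi c k)) ≤ W → Aall a c := by
  intro W
  induction W with
  | zero =>
    intro a c hA hC hdeg hle hsum
    have hkey : ∀ k, Xi a k = Xi c k := by
      intro k
      rcases lt_or_ge k n with hk | hk
      · have := Finset.sum_eq_zero_iff.mp (Nat.le_zero.mp hsum) k (Finset.mem_range.mpr hk)
        have := hle k
        omega
      · rw [Xi_eq_deg a k (fun i hi => by have := hA i hi; omega),
          Xi_eq_deg c k (fun i hi => by have := hC i hi; omega), hdeg]
    have : a = c := Xi_inj (funext hkey)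
    rw [this]
    exact Relation.ReflTransGen.refl
  | succ W ih =>
    intro a c hA hC hdeg hle hsum
    by_cases hac : a = c
    · rw [hac]
      exact Relation.ReflTransGen.refl
    -- find minimal i with a i ≠ c i
    have hne : ∃ i, a i ≠ c i := by
      by_contra hcon
      push_neg at hcon
      exact hac (Finsupp.ext hcon)
    set i := Nat.find hne with hi_def
    have hi : a i ≠ c i := Nat.find_spec hne
    have hmin : ∀ t, t < i → a t = c t := fun t ht => not_not.mp (Nat.find_min hne ht)
    have hS : ∑ t ∈ Finset.range i, a t = ∑ t ∈ Finset.range i, c t :=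
      Finset.sum_congr rfl fun t ht => hmin t (Finset.mem_range.mp ht)
    have hXa : Xi a i = (∑ t ∈ Finset.range i, a t) + a i := Finset.sum_range_succ _ _
    have hXc : Xi c i = (∑ t ∈ Finset.range i, c t) + c i := Finset.sum_range_succ _ _
    have hXiaiS : Xi c i < Xi a i := by
      have := hle i
      omega
    have hai : c i < a i := by omega
    have hin : i < n := hA i (Finsupp.mem_support_iff.mpr (by omega))
    have hn1 : 1 ≤ n := by omega
    have hK : Xi a (n - 1) = Xi c (n - 1) := by
      rw [Xi_eq_deg a _ (fun t ht => by have := hA t ht; omega),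
        Xi_eq_deg c _ (fun t ht => by have := hC t ht; omega), hdeg]
    have hiK : i < n - 1 := by
      rcases lt_or_ge i (n - 1) with h | h
      · exact h
      · exfalso; have : i = n - 1 := by omega
        rw [this] at hXiaiS; omega
    have hjex : ∃ j, i < j ∧ Xi a j = Xi c j := ⟨n - 1, hiK, hK⟩
    set j := Nat.find hjex with hj_def
    obtain ⟨hij, hXj⟩ : i < j ∧ Xi a j = Xi c j := Nat.find_spec hjex
    have hjK : j ≤ n - 1 := Nat.find_min' hjex ⟨hiK, hK⟩
    have hjn : j < n := by omega
    have hstrict : ∀ t, i ≤ t → t < j → Xi c t < Xi a t := by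
      intro t h1 h2
      rcases eq_or_lt_of_le h1 with rfl | h1'
      · exact hXiaiS
      · have := Nat.find_min hjex h2
        push_neg at this
        have hne' := this h1'
        have := hle t
        omega
    -- the move
    set a' : Mon := a + Finsupp.single j 1 - Finsupp.single i 1 with ha'_def
    have hsle : Finsupp.single i 1 ≤ a + Finsupp.single j 1 :=
      le_trans (Finsupp.single_le_iff.mpr (by omega)) le_self_add
    have hkey : a' + Finsupp.single i 1 = a + Finsupp.single j 1 :=
      tsub_add_cancel_of_le hsle
    have hElem : ElemMove a a' := ⟨i, j, hij, hkey.symm⟩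
    have hXa' : ∀ k, Xi a' k + (if i ≤ k then 1 else 0) = Xi a k + (if j ≤ k then 1 else 0) := by
      intro k
      have := congrArg (fun m => Xi m k) hkey
      simpa [Xi_add, Xi_single] using this
    have hle2 : ∀ k, Xi a' k ≤ Xi a k := by
      intro k
      have := hXa' k
      split_ifs at this <;> omega
    have hle' : ∀ k, Xi c k ≤ Xi a' k := by
      intro k
      have h1 := hXa' k
      rcases lt_or_ge k i with h | h
      · have : ¬ i ≤ k := by omega
        have : ¬ j ≤ k := by omega
        have := hle k
        split_ifs at h1 <;> omega
      · rcases lt_or_ge k j with h2 | h2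
        · have := hstrict k h h2
          split_ifs at h1 <;> omega
        · have := hle k
          split_ifs at h1 <;> omega
    have hdeg' : deg a' = deg c := by
      have := congrArg deg hkey
      rw [deg_add, deg_add, deg_single, deg_single] at this
      omega
    have hA' : InVars n a' := by
      intro t ht
      have ht' : a' t ≠ 0 := Finsupp.mem_support_iff.mp ht
      have hle3 : a' t ≤ a t + (Finsupp.single j 1 : Mon) t := by
        rw [ha'_def, Finsupp.tsub_apply, Finsupp.add_apply]
        omega
      rw [Finsupp.single_apply] at hle3
      by_cases htj : t = j
      · omega
      · rw [if_neg (Ne.symm htj)] at hle3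
        have hta : a t ≠ 0 := by omega
        exact hA t (Finsupp.mem_support_iff.mpr hta)
    have hsum' : (∑ k ∈ Finset.range n, (Xi a' k - Xi c k)) ≤ W := by
      have hlt : (∑ k ∈ Finset.range n, (Xi a' k - Xi c k)) <
          ∑ k ∈ Finset.range n, (Xi a k - Xi c k) := by
        apply Finset.sum_lt_sum
        · intro t _
          have := hle2 t
          omega
        · refine ⟨i, Finset.mem_range.mpr hin, ?_⟩
          have h1 := hXa' i
          rw [if_pos le_rfl, if_neg (by omega)] at h1
          omega
      omega
    exact Relation.ReflTransGen.head
      (Or.inr ⟨n, deg c, Relation.ReflTransGen.single ⟨hA, hA', hdeg, hdeg', hElem⟩⟩)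
      (ih a' c hA' hC hdeg' hle' hsum')


lemma le_aall {a b : Mon} (hle : ∀ k, Xi b k ≤ Xi a k) : Aall a b := by
  set N : ℕ := max (a.support.sup id) (b.support.sup id) + 1 with hN
  have hNa : ∀ i ∈ a.support, i < N := fun i hi => by
    have := Finset.le_sup (f := id) hi; simp only [id] at this; omega
  have hNb : ∀ i ∈ b.support, i < N := fun i hi => by
    have := Finset.le_sup (f := id) hi; simp only [id] at this; omega
  have hdegle : deg b ≤ deg a := by
    have h1 := Xi_eq_deg a N (fun i hi => by have := hNa i hi; omega)
    have h2 := Xi_eq_deg b N (fun i hi => by have := hNb i hi; omega)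
    have := hle N
    omega
  set t : Mon := Finsupp.single N (deg a - deg b) with ht
  set c : Mon := b + t with hc
  have h1 : Aall c b := Relation.ReflTransGen.single (Or.inl ⟨t, rfl⟩)
  have hdegc : deg a = deg c := by
    rw [hc, deg_add, ht, deg_single]; omega
  have hXic : ∀ k, Xi c k = Xi b k + (if N ≤ k then deg a - deg b else 0) := by
    intro k; rw [hc, Xi_add, ht, Xi_single]
  have hc_le : ∀ k, Xi c k ≤ Xi a k := by
    intro k
    rw [hXic k]
    rcases lt_or_ge k N with h | h
    · rw [if_neg (by omega)]; exact hle k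
    · rw [if_pos h]
      have h1 := Xi_eq_deg a k (fun i hi => by have := hNa i hi; omega)
      have h2 := Xi_eq_deg b k (fun i hi => by have := hNb i hi; omega)
      omega
  have hcc : ∀ k, Xi b k ≤ Xi c k := by
    intro k; rw [hXic k]; omega
  have hInA : InVars (N + 1) a := fun i hi => by have := hNa i hi; omega
  have hInC : InVars (N + 1) c := by
    intro i hi
    have hi' : c i ≠ 0 := Finsupp.mem_support_iff.mp hi
    rw [hc, Finsupp.add_apply, ht, Finsupp.single_apply] at hi'
    by_cases hiN : N = i
    · omega
    · rw [if_neg hiN] at hi'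
      have := hNb i (Finsupp.mem_support_iff.mpr (by omega))
      omega
  have h2 : Aall a c := eqdeg (N + 1) _ a c hInA hInC hdegc hc_le le_rfl
  exact h2.trans h1

lemma aall_iff (a b : Mon) : Aall a b ↔ ∀ k, Xi b k ≤ Xi a k :=
  ⟨aall_le, le_aall⟩

lemma max_mem (a b : Mon) : ∃ m : Mon, Xi m = fun k => max (Xi a k) (Xi b k) := by
  apply mem_range_Xi (N := max (a.support.sup id) (b.support.sup id))
  · intro x y h
    exact max_le_max (Xi_mono a h) (Xi_mono b h)
  · intro k hk
    rw [Xi_eventually a k (le_trans (le_max_left _ _) hk),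
      Xi_eventually b k (le_trans (le_max_right _ _) hk),
      Xi_eventually a _ (le_max_left _ _), Xi_eventually b _ (le_max_right _ _)]

lemma min_mem (a b : Mon) : ∃ m : Mon, Xi m = fun k => min (Xi a k) (Xi b k) := by
  apply mem_range_Xi (N := max (a.support.sup id) (b.support.sup id))
  · intro x y h
    exact min_le_min (Xi_mono a h) (Xi_mono b h)
  · intro k hk
    rw [Xi_eventually a k (le_trans (le_max_left _ _) hk),
      Xi_eventually b k (le_trans (le_max_right _ _) hk),
      Xi_eventually a _ (le_max_left _ _), Xi_eventually b _ (le_max_right _ _)]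

noncomputable def mSup (a b : Mon) : Mon := Classical.choose (max_mem a b)
lemma mSup_spec (a b : Mon) : Xi (mSup a b) = fun k => max (Xi a k) (Xi b k) :=
  Classical.choose_spec (max_mem a b)
noncomputable def mInf (a b : Mon) : Mon := Classical.choose (min_mem a b)
lemma mInf_spec (a b : Mon) : Xi (mInf a b) = fun k => min (Xi a k) (Xi b k) :=
  Classical.choose_spec (min_mem a b)

noncomputable def monDL : DistribLattice Mon :=
  letI : Max Mon := ⟨mSup⟩
  letI : Min Mon := ⟨mInf⟩
  letI : LE Mon := ⟨fun a b => Xi a ≤ Xi b⟩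
  letI : LT Mon := ⟨fun a b => Xi a < Xi b⟩
  Function.Injective.distribLattice Xi Xi_inj Iff.rfl Iff.rfl
    (fun a b => by funext k; rw [show a ⊔ b = mSup a b from rfl, mSup_spec]; rfl)
    (fun a b => by funext k; rw [show a ⊓ b = mInf a b from rfl, mInf_spec]; rfl)

lemma monDL_le (a b : Mon) : monDL.le a b ↔ Aall b a := by
  have : monDL.le a b ↔ Xi a ≤ Xi b := Iff.rfl
  rw [this, aall_iff]
  exact ⟨fun h k => h k, fun h k => h k⟩


/-- `Ξ` is an order isomorphism from `(M, A_{·,·})` onto the set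
of weakly increasing, eventually constant functions `ℕ → ℕ`, ordered pointwise.
In particular `(M, A_{·,·})` is a distributive lattice. -/
theorem stmt7 :
    Function.Injective Xi ∧
    Set.range Xi = {g : ℕ → ℕ | Monotone g ∧ ∃ N, ∀ k, N ≤ k → g k = g N} ∧
    (∀ a b : Mon, Aall a b ↔ ∀ k, Xi b k ≤ Xi a k) ∧
    (∃ inst : DistribLattice Mon, ∀ a b : Mon, inst.le a b ↔ Aall b a) :=
  ⟨Xi_inj, Xi_range, aall_iff, monDL, monDL_le⟩
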